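/- Let X₁, X₂ be real Banach spaces and X = X₁ × X₂ with norm ‖(x,y)‖ = (‖x‖² + ‖y‖²)^{1/2}. Let A₁ : X₁ → X₁, A₂ : X₂ → X₂, B₁ : X₂ → X₁, B₂ : X₁ → X₂ be bounded linear operators. Define E_j(τ) = exp(−τA_j), X_j(τ) = (∫₀^τ exp(−σA_j) dσ) ∘ B_j, T₁(τ)(x,y) = (E₁(τ)x + X₁(τ)y, y), T₂(τ)(x,y) = (x, X₂(τ)x + E₂(τ)y), T(τ) = T₂(τ) ∘ T₁(τ), and 𝓒(x,y) = (A₁x − B₁y, A₂y − B₂x). Then for every (u,v) ∈ X, (1/t)(T(t)(u,v) − (u,v)) converges to −𝓒(u,v) as t → 0⁺. -/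

import Mathlib

noncomputable section

open scoped Topology

variable {X₁ X₂ : Type*} [NormedAddCommGroup X₁] [NormedSpace ℝ X₁] [CompleteSpace X₁]
  [NormedAddCommGroup X₂] [NormedSpace ℝ X₂] [CompleteSpace X₂]

/-- The operator exponential `exp (-τ A)` of a bounded operator `A`. -/
def expOp {X : Type*} [NormedAddCommGroup X] [NormedSpace ℝ X] [CompleteSpace X]
    (A : X →L[ℝ] X) (τ : ℝ) : X →L[ℝ] X :=
  NormedSpace.exp (-(τ • A))

/-- The coupling operator `X(τ) = (∫₀^τ exp(-σ A) dσ) ∘ B`. -/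
def Xop {X Y : Type*} [NormedAddCommGroup X] [NormedSpace ℝ X] [CompleteSpace X]
    [NormedAddCommGroup Y] [NormedSpace ℝ Y] (A : X →L[ℝ] X) (B : Y →L[ℝ] X) (τ : ℝ) :
    Y →L[ℝ] X :=
  (∫ σ in (0:ℝ)..τ, expOp A σ).comp B

/-- Lift of a block operator on `X₁ × X₂` to the `ℓ²`-product space
`X = X₁ × X₂` with norm `‖(x,y)‖ = (‖x‖² + ‖y‖²)^(1/2)`. -/
def toL2 (M : (X₁ × X₂) →L[ℝ] (X₁ × X₂)) :
    WithLp 2 (X₁ × X₂) →L[ℝ] WithLp 2 (X₁ × X₂) :=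
  ((WithLp.prodContinuousLinearEquiv 2 ℝ X₁ X₂).symm.toContinuousLinearMap.comp M).comp
    (WithLp.prodContinuousLinearEquiv 2 ℝ X₁ X₂).toContinuousLinearMap

/-- The split-step operator `T₁(τ)(x,y) = (exp(-τA₁)x + X₁(τ)y, y)`. -/
def T1 (A₁ : X₁ →L[ℝ] X₁) (B₁ : X₂ →L[ℝ] X₁) (τ : ℝ) :
    WithLp 2 (X₁ × X₂) →L[ℝ] WithLp 2 (X₁ × X₂) :=
  toL2 (((expOp A₁ τ).coprod (Xop A₁ B₁ τ)).prod (ContinuousLinearMap.snd ℝ X₁ X₂))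

/-- The split-step operator `T₂(τ)(x,y) = (x, X₂(τ)x + exp(-τA₂)y)`. -/
def T2 (A₂ : X₂ →L[ℝ] X₂) (B₂ : X₁ →L[ℝ] X₂) (τ : ℝ) :
    WithLp 2 (X₁ × X₂) →L[ℝ] WithLp 2 (X₁ × X₂) :=
  toL2 ((ContinuousLinearMap.fst ℝ X₁ X₂).prod ((Xop A₂ B₂ τ).coprod (expOp A₂ τ)))

/-- The split-step approximation operator `T(τ) = T₂(τ) ∘ T₁(τ)`. -/
def Tfull (A₁ : X₁ →L[ℝ] X₁) (A₂ : X₂ →L[ℝ] X₂) (B₁ : X₂ →L[ℝ] X₁) (B₂ : X₁ →L[ℝ] X₂)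
    (τ : ℝ) : WithLp 2 (X₁ × X₂) →L[ℝ] WithLp 2 (X₁ × X₂) :=
  (T2 A₂ B₂ τ).comp (T1 A₁ B₁ τ)

/-- The full operator `𝓒(x,y) = (A₁x - B₁y, A₂y - B₂x)`. -/
def opC (A₁ : X₁ →L[ℝ] X₁) (A₂ : X₂ →L[ℝ] X₂) (B₁ : X₂ →L[ℝ] X₁) (B₂ : X₁ →L[ℝ] X₂) :
    WithLp 2 (X₁ × X₂) →L[ℝ] WithLp 2 (X₁ × X₂) :=
  toL2 ((A₁.coprod (-B₁)).prod ((-B₂).coprod A₂))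

/-- The diagonal operator `𝓐(x,y) = (A₁x, A₂y)`. -/
def opA (A₁ : X₁ →L[ℝ] X₁) (A₂ : X₂ →L[ℝ] X₂) :
    WithLp 2 (X₁ × X₂) →L[ℝ] WithLp 2 (X₁ × X₂) :=
  toL2 (A₁.prodMap A₂)

/-- The off-diagonal coupling operator `𝓑(x,y) = (B₁y, B₂x)`. -/
def opB (B₁ : X₂ →L[ℝ] X₁) (B₂ : X₁ →L[ℝ] X₂) :
    WithLp 2 (X₁ × X₂) →L[ℝ] WithLp 2 (X₁ × X₂) :=
  toL2 (((0 : X₁ →L[ℝ] X₁).coprod B₁).prod (B₂.coprod (0 : X₂ →L[ℝ] X₂)))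

section Aux

variable {Y : Type*} [NormedAddCommGroup Y] [NormedSpace ℝ Y]

lemma expOp_continuous {X : Type*} [NormedAddCommGroup X] [NormedSpace ℝ X] [CompleteSpace X]
    (A : X →L[ℝ] X) : Continuous (expOp A) := by
  exact continuous_iff_continuousAt.2 fun t => by
    have h := (hasDerivAt_exp_smul_const (𝕂 := ℝ) A (-t)).continuousAt.comp_of_eq
      (continuous_neg.continuousAt (x := t)) rfl
    show ContinuousAt (fun τ : ℝ => NormedSpace.exp (-(τ • A))) t
    simpa [Function.comp_def, neg_smul] using h

lemma expOp_hasDerivAt_zero {X : Type*} [NormedAddCommGroup X] [NormedSpace ℝ X] [CompleteSpace X]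
    (A : X →L[ℝ] X) : HasDerivAt (expOp A) (-A) 0 := by
  have h := hasDerivAt_exp_smul_const (𝕂 := ℝ) A ((-0:ℝ))
  have hneg : HasDerivAt (fun t : ℝ => -t) (-1) 0 := (hasDerivAt_id (0:ℝ)).neg
  have h2 := h.scomp (0:ℝ) hneg
  have : (fun t : ℝ => NormedSpace.exp ((-t) • A)) = expOp A := by
    funext t; simp [expOp, neg_smul]
  rw [Function.comp_def] at h2
  simp only [neg_zero] at h2
  rw [this] at h2
  simpa [NormedSpace.exp_zero] using h2

lemma Xop_hasDerivAt_zero {X : Type*} [NormedAddCommGroup X] [NormedSpace ℝ X] [CompleteSpace X]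
    (A : X →L[ℝ] X) (B : Y →L[ℝ] X) : HasDerivAt (Xop A B) B 0 := by
  have hI : HasDerivAt (fun t : ℝ => ∫ σ in (0:ℝ)..t, expOp A σ) (expOp A 0) 0 :=
    ((expOp_continuous A).integral_hasStrictDerivAt 0 0).hasDerivAt
  have := (((ContinuousLinearMap.compL ℝ Y X X).flip B).hasFDerivAt.comp_hasDerivAt 0 hI)
  have hx0 : expOp A 0 = 1 := by simp [expOp, NormedSpace.exp_zero]
  show HasDerivAt (fun t : ℝ => (∫ σ in (0:ℝ)..t, expOp A σ).comp B) B 0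
  simpa [Xop, hx0, Function.comp_def, ContinuousLinearMap.one_def] using this

lemma Xop_zero {X : Type*} [NormedAddCommGroup X] [NormedSpace ℝ X] [CompleteSpace X]
    (A : X →L[ℝ] X) (B : Y →L[ℝ] X) : Xop A B 0 = 0 := by
  simp [Xop]

lemma expOp_zero {X : Type*} [NormedAddCommGroup X] [NormedSpace ℝ X] [CompleteSpace X]
    (A : X →L[ℝ] X) : expOp A 0 = 1 := by simp [expOp, NormedSpace.exp_zero]

end Aux

/-- The split-step operators `T(t)` have derivative `-𝓒` at `t = 0⁺` in the strong sense:
for every `(u,v) ∈ X`, `(1/t)(T(t)(u,v) - (u,v)) → -𝓒(u,v)` as `t → 0⁺`. -/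
theorem Tfull_derivative_at_zero (A₁ : X₁ →L[ℝ] X₁) (A₂ : X₂ →L[ℝ] X₂)
    (B₁ : X₂ →L[ℝ] X₁) (B₂ : X₁ →L[ℝ] X₂) (P : WithLp 2 (X₁ × X₂)) :
    Filter.Tendsto (fun t : ℝ => (1 / t) • (Tfull A₁ A₂ B₁ B₂ t P - P))
      (𝓝[>] 0) (𝓝 (-(opC A₁ A₂ B₁ B₂ P))) := by
  set u := P.ofLp.1 with hu
  set v := P.ofLp.2 with hv
  have hf : HasDerivAt (fun t : ℝ => expOp A₁ t u + Xop A₁ B₁ t v)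
      (-(A₁ u) + B₁ v) 0 := by
    have h1 := (expOp_hasDerivAt_zero A₁).clm_apply (hasDerivAt_const 0 u)
    have h2 := (Xop_hasDerivAt_zero A₁ B₁).clm_apply (hasDerivAt_const 0 v)
    simpa [Xop_zero, Pi.add_def] using h1.add h2
  have hf0 : expOp A₁ 0 u + Xop A₁ B₁ 0 v = u := by simp [Xop_zero, expOp_zero]
  have hg : HasDerivAt
      (fun t : ℝ => Xop A₂ B₂ t (expOp A₁ t u + Xop A₁ B₁ t v) + expOp A₂ t v)
      (B₂ u + -(A₂ v)) 0 := by
    have h1 := (Xop_hasDerivAt_zero A₂ B₂).clm_apply hf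
    have h2 := (expOp_hasDerivAt_zero A₂).clm_apply (hasDerivAt_const 0 v)
    simpa [Xop_zero, expOp_zero, hf0, Pi.add_def] using h1.add h2
  have hprod := hf.prodMk hg
  have hlift := ((WithLp.prodContinuousLinearEquiv 2 ℝ X₁ X₂).symm.toContinuousLinearMap
    ).hasFDerivAt.comp_hasDerivAt 0 hprod
  rw [Function.comp_def] at hlift
  have heq : (fun t : ℝ => (WithLp.prodContinuousLinearEquiv 2 ℝ X₁ X₂).symm
        (expOp A₁ t u + Xop A₁ B₁ t v,
          Xop A₂ B₂ t (expOp A₁ t u + Xop A₁ B₁ t v) + expOp A₂ t v))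
      = fun t : ℝ => Tfull A₁ A₂ B₁ B₂ t P := rfl
  have heq2 : (WithLp.prodContinuousLinearEquiv 2 ℝ X₁ X₂).symm
      ((-(A₁ u) + B₁ v, B₂ u + -(A₂ v)) : X₁ × X₂) = -(opC A₁ A₂ B₁ B₂ P) := by
    have hpair : ((-(A₁ u) + B₁ v, B₂ u + -(A₂ v)) : X₁ × X₂)
        = -(A₁ u + -(B₁ v), -(B₂ u) + A₂ v) := by
      simp [Prod.ext_iff]
      constructor <;> abel
    rw [hpair, map_neg]
    rfl
  have hD : HasDerivAt (fun t : ℝ => Tfull A₁ A₂ B₁ B₂ t P)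
      (-(opC A₁ A₂ B₁ B₂ P)) 0 := by
    rw [← heq, ← heq2]
    exact hlift
  have h0 : Tfull A₁ A₂ B₁ B₂ 0 P = P := by
    rw [← congrFun heq 0]
    show (WithLp.prodContinuousLinearEquiv 2 ℝ X₁ X₂).symm _ = P
    rw [hf0, Xop_zero, expOp_zero]
    simp only [ContinuousLinearMap.zero_apply, ContinuousLinearMap.one_apply, zero_add]
    rfl
  have hts := hasDerivAt_iff_tendsto_slope.mp hD
  refine (hts.mono_left (nhdsWithin_mono 0 ?_)).congr ?_
  · intro x hx
    exact ne_of_gt hx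
  · intro t
    simp [slope, h0, one_div, vsub_eq_sub]
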